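/- Let t ≥ 1 be an integer and let G be a connected finite simple graph with 2 ≤ |V(G)| ≤ t+1. Then: (i) for every finite simple graph W with at least one vertex, t(K_{1,t}, W) ≥ t(G, W)^{t/(|V(G)|-1)}; and (ii) for every real c < t/(|V(G)|-1) there exists a finite simple graph W with t(G, W) > 0 and t(K_{1,t}, W) < t(G, W)^c. -/

import Mathlib

/-- The homomorphism density `t(G, W)`. -/
noncomputable def homDensity {α β : Type} [Fintype α] [Fintype β]
    (G : SimpleGraph α) (W : SimpleGraph β) : ℝ :=
  (Nat.card (G →g W) : ℝ) / (Fintype.card β : ℝ) ^ (Fintype.card α)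

/-- The star `K_{1,t}` with `t` edges. -/
def starGraph (t : ℕ) : SimpleGraph (Fin 1 ⊕ Fin t) := completeBipartiteGraph (Fin 1) (Fin t)

open Finset

section Star

variable {β : Type} (t : ℕ) (W : SimpleGraph β)

def starHomEquiv : (starGraph t →g W) ≃ (x : β) × (Fin t → {y : β // W.Adj x y}) where
  toFun f := ⟨f (Sum.inl 0), fun j => ⟨f (Sum.inr j), f.map_rel (by
    simp [starGraph, completeBipartiteGraph])⟩⟩
  invFun p := ⟨fun z => Sum.rec (fun _ => p.1) (fun j => (p.2 j).1) z, by
    rintro (i | i) (j | j) h <;>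
      simp only [starGraph, completeBipartiteGraph, Sum.isLeft, Sum.isRight] at h <;>
      simp_all
    · exact (p.2 j).2
    · exact ((p.2 i).2).symm⟩
  left_inv f := by
    ext z
    rcases z with i | j
    · have : i = 0 := Subsingleton.elim _ _
      subst this; rfl
    · rfl
  right_inv p := by
    rcases p with ⟨x, g⟩
    rfl

lemma nat_card_starHom [Fintype β] [DecidableRel W.Adj] :
    Nat.card (starGraph t →g W) = ∑ x, W.degree x ^ t := by
  classical
  rw [Nat.card_congr (starHomEquiv t W)]
  rw [Nat.card_eq_fintype_card, Fintype.card_sigma]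
  refine Finset.sum_congr rfl fun x _ => ?_
  rw [Fintype.card_fun]
  congr 1
  · exact (SimpleGraph.card_neighborSet_eq_degree W x).symm ▸ rfl
  · exact Fintype.card_fin t

end Star


section TreeDefs

mutual
inductive RT (α : Type) : Type
  | node (a : α) (f : RF α) : RT α
inductive RF (α : Type) : Type
  | nil : RF α
  | cons (t : RT α) (f : RF α) : RF α
end

variable {α β : Type}

mutual
def RT.labels : RT α → List α
  | .node a f => a :: f.labels
def RF.labels : RF α → List α
  | .nil => []
  | .cons t f => t.labels ++ f.labels
end

def RT.root : RT α → α
  | .node a _ => a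

mutual
def RT.valid (G : SimpleGraph α) : RT α → Prop
  | .node a f => f.valid G a
def RF.valid (G : SimpleGraph α) (a : α) : RF α → Prop
  | .nil => True
  | .cons t f => G.Adj a t.root ∧ t.valid G ∧ f.valid G a
end

theorem RT.root_mem_labels (T : RT α) : T.root ∈ T.labels := by
  rcases T with ⟨a, f⟩
  simp [RT.root, RT.labels]

variable [Fintype β] [DecidableEq β]

mutual
def RT.cnt (W : SimpleGraph β) [DecidableRel W.Adj] : RT α → β → ℕ
  | .node _ f, x => f.cnt W x
def RF.cnt (W : SimpleGraph β) [DecidableRel W.Adj] : RF α → β → ℕ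
  | .nil, _ => 1
  | .cons t f, x => (∑ y ∈ W.neighborFinset x, t.cnt W y) * f.cnt W x
end

variable [DecidableEq α] [Fintype α]

mutual
def RT.homS (W : SimpleGraph β) [DecidableRel W.Adj] (b₀ : β) : RT α → β → Finset (α → β)
  | .node a f, x => (RF.homS W b₀ f x).image (fun g => Function.update g a x)
def RF.homS (W : SimpleGraph β) [DecidableRel W.Adj] (b₀ : β) : RF α → β → Finset (α → β)
  | .nil, _ => {fun _ => b₀}
  | .cons t f, x => (W.neighborFinset x).biUnion fun y =>
      ((RT.homS W b₀ t y) ×ˢ (RF.homS W b₀ f x)).image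
        (fun p => fun a => if a ∈ t.labels then p.1 a else p.2 a)
end

variable {W : SimpleGraph β} [DecidableRel W.Adj] {b₀ : β}

mutual
theorem RT.homS_support : ∀ (T : RT α) (x : β) (g : α → β), g ∈ T.homS W b₀ x →
    ∀ a, a ∉ T.labels → g a = b₀
  | .node a f, x, g, hg, z, hz => by
    simp only [RT.homS, Finset.mem_image] at hg
    obtain ⟨g', hg', rfl⟩ := hg
    simp only [RT.labels, List.mem_cons, not_or] at hz
    rw [Function.update_of_ne hz.1]
    exact RF.homS_support f x g' hg' z hz.2
theorem RF.homS_support : ∀ (F : RF α) (x : β) (g : α → β), g ∈ F.homS W b₀ x →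
    ∀ a, a ∉ F.labels → g a = b₀
  | .nil, x, g, hg, z, hz => by
    simp only [RF.homS, Finset.mem_singleton] at hg
    subst hg; rfl
  | .cons t f, x, g, hg, z, hz => by
    simp only [RF.homS, Finset.mem_biUnion, Finset.mem_image, Finset.mem_product] at hg
    obtain ⟨y, _, ⟨p, ⟨hp1, hp2⟩, rfl⟩⟩ := hg
    simp only [RF.labels, List.mem_append, not_or] at hz
    simp only [if_neg hz.1]
    exact RF.homS_support f x p.2 hp2 z hz.2
end

theorem RT.homS_root (T : RT α) (x : β) (g : α → β) (hg : g ∈ T.homS W b₀ x) :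
    g T.root = x := by
  rcases T with ⟨a, f⟩
  simp only [RT.homS, Finset.mem_image] at hg
  obtain ⟨g', _, rfl⟩ := hg
  simp [RT.root, Function.update_self]


mutual
theorem RT.card_homS : ∀ (T : RT α), T.labels.Nodup → ∀ (x : β),
    (T.homS W b₀ x).card = T.cnt W x
  | .node a f, hnd, x => by
    simp only [RT.labels, List.nodup_cons] at hnd
    simp only [RT.homS, RT.cnt]
    rw [Finset.card_image_of_injOn, RF.card_homS f hnd.2 x]
    intro g hg g' hg' hupd
    funext z
    by_cases hz : z = a
    · subst hz
      rw [RF.homS_support f x g hg z hnd.1, RF.homS_support f x g' hg' z hnd.1]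
    · have := congrFun hupd z
      simpa only [Function.update_of_ne hz] using this
theorem RF.card_homS : ∀ (F : RF α), F.labels.Nodup → ∀ (x : β),
    (F.homS W b₀ x).card = F.cnt W x
  | .nil, _, x => by simp [RF.homS, RF.cnt]
  | .cons t f, hnd, x => by
    simp only [RF.labels, List.nodup_append] at hnd
    obtain ⟨hnt, hnf, hdisj⟩ := hnd
    simp only [RF.homS, RF.cnt]
    rw [Finset.card_biUnion, Finset.sum_mul]
    · refine Finset.sum_congr rfl fun y _ => ?_
      rw [Finset.card_image_of_injOn, Finset.card_product,
        RT.card_homS t hnt y, RF.card_homS f hnf x]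
      rintro ⟨g1, g2⟩ hp ⟨g1', g2'⟩ hp' heq
      simp only [Finset.mem_coe, Finset.mem_product] at hp hp'
      have h1 : g1 = g1' := by
        funext z
        by_cases hz : z ∈ t.labels
        · have := congrFun heq z
          simpa [if_pos hz] using this
        · rw [RT.homS_support t y g1 hp.1 z hz, RT.homS_support t y g1' hp'.1 z hz]
      have h2 : g2 = g2' := by
        funext z
        by_cases hz : z ∈ t.labels
        · have hzf : z ∉ f.labels := fun hzf => hdisj z hz z hzf rfl
          rw [RF.homS_support f x g2 hp.2 z hzf, RF.homS_support f x g2' hp'.2 z hzf]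
        · have := congrFun heq z
          simpa [if_neg hz] using this
      simp [h1, h2]
    · intro y _ y' _ hyy'
      simp only [Finset.disjoint_left]
      intro g hg hg'
      simp only [Finset.mem_image, Finset.mem_product] at hg hg'
      obtain ⟨p, ⟨hp1, _⟩, rfl⟩ := hg
      obtain ⟨p', ⟨hp1', _⟩, heq⟩ := hg'
      apply hyy'
      have e1 : p.1 t.root = y := RT.homS_root t y p.1 hp1
      have e1' : p'.1 t.root = y' := RT.homS_root t y' p'.1 hp1'
      have := congrFun heq t.root
      rw [if_pos t.root_mem_labels, if_pos t.root_mem_labels] at this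
      rw [← e1, ← e1', this]
end

section MemHom

variable {G : SimpleGraph α} {φ : α → β}

mutual
theorem RT.restr_mem_homS (hφ : ∀ {a b : α}, G.Adj a b → W.Adj (φ a) (φ b)) :
    ∀ (T : RT α), T.valid G →
    (fun z => if z ∈ T.labels then φ z else b₀) ∈ T.homS W b₀ (φ T.root)
  | .node a f, hv => by
    simp only [RT.homS, Finset.mem_image]
    refine ⟨fun z => if z ∈ f.labels then φ z else b₀, RF.restr_mem_homS hφ f hv, ?_⟩
    funext z
    by_cases hz : z = a
    · subst hz
      simp [Function.update_self, RT.labels, RT.root]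
    · rw [Function.update_of_ne hz]
      simp only [RT.labels, List.mem_cons]
      have : (z = a ∨ z ∈ f.labels) ↔ z ∈ f.labels := by simp [hz]
      rw [if_congr this rfl rfl]
theorem RF.restr_mem_homS (hφ : ∀ {a b : α}, G.Adj a b → W.Adj (φ a) (φ b)) :
    ∀ (F : RF α) {a : α}, F.valid G a →
    (fun z => if z ∈ F.labels then φ z else b₀) ∈ F.homS W b₀ (φ a)
  | .nil, a, _ => by
    simp [RF.homS, RF.labels]
  | .cons t f, a, hv => by
    obtain ⟨hadj, hvt, hvf⟩ := hv
    simp only [RF.homS, Finset.mem_biUnion]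
    refine ⟨φ t.root, ?_, ?_⟩
    · rw [SimpleGraph.mem_neighborFinset]
      exact hφ hadj
    · simp only [Finset.mem_image, Finset.mem_product]
      refine ⟨(fun z => if z ∈ t.labels then φ z else b₀,
               fun z => if z ∈ f.labels then φ z else b₀),
        ⟨RT.restr_mem_homS hφ t hvt, RF.restr_mem_homS hφ f hvf⟩, ?_⟩
      funext z
      by_cases hz : z ∈ t.labels <;> simp [RF.labels, hz]
end

end MemHom


end TreeDefs

section Attach

variable {α : Type} [DecidableEq α]

mutual
def RT.attach (a b : α) : RT α → RT α
  | .node c f => if c = a then .node c (.cons (.node b .nil) f) else .node c (f.attachF a b)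
def RF.attachF (a b : α) : RF α → RF α
  | .nil => .nil
  | .cons t f => .cons (t.attach a b) (f.attachF a b)
end

mutual
theorem RT.attach_eq_of_not_mem (a b : α) : ∀ T : RT α, a ∉ T.labels → T.attach a b = T
  | .node c f, h => by
    simp only [RT.labels, List.mem_cons, not_or] at h
    rw [RT.attach, if_neg (Ne.symm h.1), RF.attachF_eq_of_not_mem a b f h.2]
theorem RF.attachF_eq_of_not_mem (a b : α) : ∀ F : RF α, a ∉ F.labels → F.attachF a b = F
  | .nil, _ => rfl
  | .cons t f, h => by
    simp only [RF.labels, List.mem_append, not_or] at h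
    rw [RF.attachF, RT.attach_eq_of_not_mem a b t h.1, RF.attachF_eq_of_not_mem a b f h.2]
end

theorem RT.attach_root (a b : α) (T : RT α) : (T.attach a b).root = T.root := by
  rcases T with ⟨c, f⟩
  rw [RT.attach]
  split <;> rfl

mutual
theorem RT.attach_perm (a b : α) : ∀ T : RT α, T.labels.Nodup → a ∈ T.labels →
    ((T.attach a b).labels).Perm (b :: T.labels)
  | .node c f, hnd, hmem => by
    simp only [RT.labels, List.nodup_cons] at hnd
    by_cases hca : c = a
    · rw [RT.attach, if_pos hca]
      simp only [RT.labels, RF.labels, List.cons_append, List.nil_append]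
      exact List.Perm.swap _ _ _
    · rw [RT.attach, if_neg hca]
      have hmem' : a ∈ f.labels := by
        rcases List.mem_cons.1 hmem with h | h
        · exact absurd h.symm hca
        · exact h
      simp only [RT.labels]
      exact (List.Perm.cons c (RF.attachF_perm a b f hnd.2 hmem')).trans
        (List.Perm.swap _ _ _)
theorem RF.attachF_perm (a b : α) : ∀ F : RF α, F.labels.Nodup → a ∈ F.labels →
    ((F.attachF a b).labels).Perm (b :: F.labels)
  | .nil, _, hmem => absurd hmem (by simp [RF.labels])
  | .cons t f, hnd, hmem => by
    simp only [RF.labels, List.nodup_append] at hnd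
    obtain ⟨hnt, hnf, hdisj⟩ := hnd
    simp only [RF.labels] at hmem ⊢
    show ((t.attach a b).labels ++ (f.attachF a b).labels).Perm _
    rcases List.mem_append.1 hmem with h | h
    · have hnfa : a ∉ f.labels := fun hf => hdisj a h a hf rfl
      rw [RF.attachF_eq_of_not_mem a b f hnfa]
      exact ((RT.attach_perm a b t hnt h).append_right f.labels)
    · have hnta : a ∉ t.labels := fun ht => hdisj a ht a h rfl
      rw [RT.attach_eq_of_not_mem a b t hnta]
      exact ((RF.attachF_perm a b f hnf h).append_left t.labels).trans
        List.perm_middle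
end

variable {G : SimpleGraph α}

mutual
theorem RT.attach_valid {a b : α} (hab : G.Adj a b) : ∀ T : RT α, T.valid G →
    (T.attach a b).valid G
  | .node c f, hv => by
    rw [RT.attach]
    split
    · rename_i hca
      subst hca
      exact ⟨hab, trivial, hv⟩
    · exact RF.attachF_valid hab f hv
theorem RF.attachF_valid {a b : α} (hab : G.Adj a b) : ∀ (F : RF α) {c : α}, F.valid G c →
    (F.attachF a b).valid G c
  | .nil, c, _ => trivial
  | .cons t f, c, hv => by
    obtain ⟨h1, h2, h3⟩ := hv
    exact ⟨by rwa [RT.attach_root], RT.attach_valid hab t h2, RF.attachF_valid hab f h3⟩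
end

theorem exists_spanning_rt [Fintype α] (G : SimpleGraph α) (hc : G.Connected) :
    ∃ T : RT α, T.valid G ∧ T.labels.Nodup ∧ ∀ z : α, z ∈ T.labels := by
  have hne : Nonempty α := hc.nonempty
  have key : ∀ k, k < Fintype.card α → ∃ T : RT α, T.valid G ∧ T.labels.Nodup ∧
      T.labels.length = k + 1 := by
    intro k
    induction k with
    | zero =>
      intro _
      obtain ⟨a₀⟩ := hne
      exact ⟨.node a₀ .nil, trivial, by simp [RT.labels, RF.labels], by simp [RT.labels, RF.labels]⟩
    | succ k ih =>
      intro hlt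
      obtain ⟨T, hv, hnd, hlen⟩ := ih (Nat.lt_of_succ_lt hlt)
      have hScard : T.labels.toFinset.card = k + 1 := by
        rw [List.toFinset_card_of_nodup hnd, hlen]
      have : ∃ w, w ∉ T.labels.toFinset := by
        by_contra h
        push_neg at h
        have : T.labels.toFinset = Finset.univ := Finset.eq_univ_iff_forall.2 h
        rw [this, Finset.card_univ] at hScard
        omega
      obtain ⟨w, hw⟩ := this
      have hu : T.root ∈ T.labels.toFinset := List.mem_toFinset.2 T.root_mem_labels
      obtain ⟨p⟩ := hc.preconnected T.root w
      obtain ⟨d, _, hdf, hds⟩ := p.exists_boundary_dart (↑T.labels.toFinset : Set α)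
        (by simpa using hu) (by simpa using hw)
      have hdfl : d.fst ∈ T.labels := by
        simpa using hdf
      have hdsl : d.snd ∉ T.labels := by
        simpa using hds
      refine ⟨T.attach d.fst d.snd, RT.attach_valid d.adj T hv, ?_, ?_⟩
      · rw [(RT.attach_perm d.fst d.snd T hnd hdfl).nodup_iff]
        exact List.nodup_cons.2 ⟨hdsl, hnd⟩
      · rw [(RT.attach_perm d.fst d.snd T hnd hdfl).length_eq]
        simp [hlen]
  have hpos : 0 < Fintype.card α := Fintype.card_pos
  obtain ⟨T, hv, hnd, hlen⟩ := key (Fintype.card α - 1) (by omega)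
  refine ⟨T, hv, hnd, fun z => ?_⟩
  have : T.labels.toFinset = Finset.univ := by
    apply Finset.eq_univ_of_card
    rw [List.toFinset_card_of_nodup hnd, hlen]
    omega
  rw [← List.mem_toFinset, this]
  exact Finset.mem_univ z

end Attach

section CntBound

variable {α β : Type} [Fintype α] [DecidableEq α] [Fintype β] [DecidableEq β]
variable (G : SimpleGraph α) (W : SimpleGraph β) [DecidableRel W.Adj]

instance finite_hom : Finite (G →g W) :=
  Finite.of_injective (fun φ => (φ : α → β)) DFunLike.coe_injective

theorem nat_card_hom_le_sum_cnt (b₀ : β) (T : RT α) (hv : T.valid G) (hnd : T.labels.Nodup)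
    (hcov : ∀ z, z ∈ T.labels) :
    Nat.card (G →g W) ≤ ∑ x, T.cnt W x := by
  classical
  have hmem : ∀ φ : G →g W, ⇑φ ∈ Finset.univ.biUnion (fun x => T.homS W b₀ x) := by
    intro φ
    refine Finset.mem_biUnion.2 ⟨φ T.root, Finset.mem_univ _, ?_⟩
    have h := RT.restr_mem_homS (φ := ⇑φ) (b₀ := b₀) (fun h => φ.map_rel h) T hv
    have heq : (fun z => if z ∈ T.labels then φ z else b₀) = ⇑φ := by
      funext z
      rw [if_pos (hcov z)]
    rwa [heq] at h
  set s := Finset.univ.biUnion (fun x => T.homS W b₀ x) with hs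
  have hinj : Function.Injective (fun φ : G →g W => (⟨⇑φ, hmem φ⟩ : {g : α → β // g ∈ s})) :=
    fun φ φ' h => DFunLike.coe_injective (congrArg Subtype.val h)
  calc Nat.card (G →g W) ≤ Nat.card {g : α → β // g ∈ s} :=
        Nat.card_le_card_of_injective _ hinj
    _ = s.card := by rw [Nat.card_eq_fintype_card, Fintype.card_coe]
    _ ≤ ∑ x, (T.homS W b₀ x).card := Finset.card_biUnion_le
    _ = ∑ x, T.cnt W x := Finset.sum_congr rfl fun x _ => RT.card_homS T hnd x

theorem nat_card_hom_le_pow :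
    Nat.card (G →g W) ≤ Fintype.card β ^ Fintype.card α := by
  calc Nat.card (G →g W) ≤ Nat.card (α → β) :=
        Nat.card_le_card_of_injective _ DFunLike.coe_injective
    _ = Fintype.card β ^ Fintype.card α := by
        rw [Nat.card_eq_fintype_card, Fintype.card_fun]

end CntBound

section Sizes

variable {α : Type}

mutual
def RT.size : RT α → ℕ
  | .node _ f => f.size + 1
def RF.size : RF α → ℕ
  | .nil => 0
  | .cons t f => t.size + f.size
end

theorem RT.size_pos (T : RT α) : 0 < T.size := by
  rcases T with ⟨a, f⟩
  simp [RT.size]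

theorem RF.eq_nil_of_size_eq_zero : ∀ F : RF α, F.size = 0 → F = .nil
  | .nil, _ => rfl
  | .cons t f, h => by
    exfalso
    have := t.size_pos
    simp [RF.size] at h
    omega

mutual
theorem RT.length_labels : ∀ T : RT α, T.labels.length = T.size
  | .node a f => by simp [RT.labels, RT.size, RF.length_labels f]
theorem RF.length_labels : ∀ F : RF α, F.labels.length = F.size
  | .nil => rfl
  | .cons t f => by simp [RF.labels, RF.size, RT.length_labels t, RF.length_labels f]
end

end Sizes

section Analytic

variable {β : Type} [Fintype β] [DecidableEq β] (W : SimpleGraph β) [DecidableRel W.Adj]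

private lemma pw_rearrange {u w a b : ℝ} (hu : 0 ≤ u) (hw : 0 ≤ w) (ha : 0 ≤ a) (hb : 0 ≤ b) :
    u ^ a * w ^ b + u ^ b * w ^ a ≤ u ^ (a + b) + w ^ (a + b) := by
  rcases le_total u w with h | h
  · have h1 : 0 ≤ w ^ a - u ^ a := sub_nonneg.2 (Real.rpow_le_rpow hu h ha)
    have h2 : 0 ≤ w ^ b - u ^ b := sub_nonneg.2 (Real.rpow_le_rpow hu h hb)
    have key := mul_nonneg h1 h2
    rw [Real.rpow_add_of_nonneg hu ha hb, Real.rpow_add_of_nonneg hw ha hb]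
    nlinarith
  · have h1 : 0 ≤ u ^ a - w ^ a := sub_nonneg.2 (Real.rpow_le_rpow hw h ha)
    have h2 : 0 ≤ u ^ b - w ^ b := sub_nonneg.2 (Real.rpow_le_rpow hw h hb)
    have key := mul_nonneg h1 h2
    rw [Real.rpow_add_of_nonneg hu ha hb, Real.rpow_add_of_nonneg hw ha hb]
    nlinarith

private lemma nbhd_swap (F : β → β → ℝ) :
    ∑ x, ∑ y ∈ W.neighborFinset x, F x y = ∑ y, ∑ x ∈ W.neighborFinset y, F x y := by
  simp_rw [SimpleGraph.neighborFinset_eq_filter, Finset.sum_filter]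
  rw [Finset.sum_comm]
  refine Finset.sum_congr rfl fun y _ => Finset.sum_congr rfl fun x _ => ?_
  exact if_congr (W.adj_comm x y) rfl rfl

private lemma rearr {a b : ℝ} (ha : 0 ≤ a) (hb : 0 ≤ b) :
    ∑ x, ∑ y ∈ W.neighborFinset x, (W.degree x : ℝ) ^ a * (W.degree y : ℝ) ^ b ≤
      ∑ x, (W.degree x : ℝ) ^ (a + b + 1) := by
  have key : ∀ x : β, ∀ y ∈ W.neighborFinset x,
      (W.degree x : ℝ) ^ a * (W.degree y : ℝ) ^ b +
        (W.degree x : ℝ) ^ b * (W.degree y : ℝ) ^ a ≤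
      (W.degree x : ℝ) ^ (a + b) + (W.degree y : ℝ) ^ (a + b) := fun x y _ =>
    pw_rearrange (Nat.cast_nonneg _) (Nat.cast_nonneg _) ha hb
  have swap1 : ∑ x, ∑ y ∈ W.neighborFinset x, (W.degree x : ℝ) ^ a * (W.degree y : ℝ) ^ b
      = ∑ x, ∑ y ∈ W.neighborFinset x, (W.degree x : ℝ) ^ b * (W.degree y : ℝ) ^ a := by
    rw [nbhd_swap W (fun x y => (W.degree x : ℝ) ^ a * (W.degree y : ℝ) ^ b)]
    refine Finset.sum_congr rfl fun y _ => Finset.sum_congr rfl fun x _ => mul_comm _ _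
  have swap2 : ∑ x, ∑ y ∈ W.neighborFinset x, (W.degree y : ℝ) ^ (a + b)
      = ∑ x, ∑ y ∈ W.neighborFinset x, (W.degree x : ℝ) ^ (a + b) := by
    exact nbhd_swap W (fun x y => (W.degree y : ℝ) ^ (a + b))
  have main : (2 : ℝ) * (∑ x, ∑ y ∈ W.neighborFinset x,
      (W.degree x : ℝ) ^ a * (W.degree y : ℝ) ^ b) ≤
      2 * ∑ x, ∑ y ∈ W.neighborFinset x, (W.degree x : ℝ) ^ (a + b) := by
    have e1 : (2 : ℝ) * (∑ x, ∑ y ∈ W.neighborFinset x,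
        (W.degree x : ℝ) ^ a * (W.degree y : ℝ) ^ b) =
        ∑ x, ∑ y ∈ W.neighborFinset x, ((W.degree x : ℝ) ^ a * (W.degree y : ℝ) ^ b +
          (W.degree x : ℝ) ^ b * (W.degree y : ℝ) ^ a) := by
      rw [two_mul]
      nth_rewrite 2 [swap1]
      rw [← Finset.sum_add_distrib]
      refine Finset.sum_congr rfl fun x _ => (Finset.sum_add_distrib).symm
    have e2 : ∑ x, ∑ y ∈ W.neighborFinset x, ((W.degree x : ℝ) ^ (a+b) +
          (W.degree y : ℝ) ^ (a+b)) =
        2 * ∑ x, ∑ y ∈ W.neighborFinset x, (W.degree x : ℝ) ^ (a + b) := by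
      rw [two_mul]
      nth_rewrite 2 [← swap2]
      rw [← Finset.sum_add_distrib]
      refine Finset.sum_congr rfl fun x _ => Finset.sum_add_distrib
    rw [e1, ← e2]
    exact Finset.sum_le_sum fun x _ => Finset.sum_le_sum (key x)
  have hfin : ∑ x, ∑ y ∈ W.neighborFinset x, (W.degree x : ℝ) ^ (a + b) =
      ∑ x, (W.degree x : ℝ) ^ (a + b + 1) := by
    refine Finset.sum_congr rfl fun x _ => ?_
    rw [Finset.sum_const, SimpleGraph.card_neighborFinset_eq_degree, nsmul_eq_mul, mul_comm,
      Real.rpow_add_of_nonneg (Nat.cast_nonneg _) (by linarith) zero_le_one, Real.rpow_one]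
  have := (mul_le_mul_iff_right₀ (by norm_num : (0:ℝ) < 2)).1 main
  rwa [hfin] at this

private lemma lemM {p r : ℝ} (hp : 1 ≤ p) (hr : 0 ≤ r) :
    ∑ y, (∑ x ∈ W.neighborFinset y, (W.degree x : ℝ) ^ r) ^ p ≤
      ∑ x, (W.degree x : ℝ) ^ (p * (r + 1)) := by
  have step1 : ∀ y : β, (∑ x ∈ W.neighborFinset y, (W.degree x : ℝ) ^ r) ^ p ≤
      (W.degree y : ℝ) ^ (p - 1) * ∑ x ∈ W.neighborFinset y, (W.degree x : ℝ) ^ (r * p) := by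
    intro y
    have := Real.rpow_sum_le_const_mul_sum_rpow_of_nonneg (W.neighborFinset y)
      (f := fun x => (W.degree x : ℝ) ^ r) hp (fun x _ => Real.rpow_nonneg (Nat.cast_nonneg _) r)
    rw [SimpleGraph.card_neighborFinset_eq_degree] at this
    refine this.trans (le_of_eq ?_)
    congr 1
    refine Finset.sum_congr rfl fun x _ => ?_
    rw [← Real.rpow_mul (Nat.cast_nonneg _)]
  calc ∑ y, (∑ x ∈ W.neighborFinset y, (W.degree x : ℝ) ^ r) ^ p
      ≤ ∑ y, (W.degree y : ℝ) ^ (p - 1) * ∑ x ∈ W.neighborFinset y, (W.degree x : ℝ) ^ (r * p) :=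
        Finset.sum_le_sum fun y _ => step1 y
    _ = ∑ y, ∑ x ∈ W.neighborFinset y, (W.degree y : ℝ) ^ (p-1) * (W.degree x : ℝ) ^ (r * p) :=
        Finset.sum_congr rfl fun y _ => Finset.mul_sum _ _ _
    _ ≤ ∑ y, (W.degree y : ℝ) ^ ((p - 1) + r * p + 1) :=
        rearr W (by linarith) (by positivity)
    _ = ∑ x, (W.degree x : ℝ) ^ (p * (r + 1)) :=
        Finset.sum_congr rfl fun x _ => by ring_nf

end Analytic

section ClaimD

variable {α β : Type} [Fintype α] [DecidableEq α] [Fintype β] [DecidableEq β]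


private theorem combineHolder (W : SimpleGraph β) [DecidableRel W.Adj]
    (g1 g2 : β → ℝ) (hg1nn : ∀ x, 0 ≤ g1 x) (hg2nn : ∀ x, 0 ≤ g2 x)
    {P1 P2 s : ℝ} (hP1pos : 0 < P1) (hP2pos : 0 < P2)
    (IH1 : ∑ x, g1 x ^ (s / P1) ≤ ∑ x, (W.degree x : ℝ) ^ s)
    (IH2 : ∑ x, g2 x ^ (s / P2) ≤ ∑ x, (W.degree x : ℝ) ^ s) :
    ∑ x, (g1 x * g2 x) ^ (s / (P1 + P2)) ≤ ∑ x, (W.degree x : ℝ) ^ s := by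
  set Ds : ℝ := ∑ x, ((W.degree x : ℕ) : ℝ) ^ s with hDs
  have hDsnn : 0 ≤ Ds := Finset.sum_nonneg fun x _ =>
    Real.rpow_nonneg (Nat.cast_nonneg _) s
  have hconj : Real.HolderConjugate ((P1 + P2) / P1) ((P1 + P2) / P2) := by
    rw [Real.holderConjugate_iff]
    constructor
    · rw [lt_div_iff₀ hP1pos]; linarith
    · rw [inv_div, inv_div]
      field_simp
  have A3 := Real.inner_le_Lp_mul_Lq_of_nonneg Finset.univ hconj
    (f := fun x => g1 x ^ (s / (P1 + P2))) (g := fun x => g2 x ^ (s / (P1 + P2)))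
    (fun x _ => Real.rpow_nonneg (hg1nn x) _) (fun x _ => Real.rpow_nonneg (hg2nn x) _)
  have e1 : ∀ x : β, (g1 x ^ (s / (P1 + P2))) ^ ((P1 + P2) / P1) = g1 x ^ (s / P1) := by
    intro x
    rw [← Real.rpow_mul (hg1nn x)]
    congr 1
    rw [div_mul_div_comm]
    rw [mul_comm s (P1 + P2), mul_div_mul_left _ _ (by linarith : P1 + P2 ≠ 0)]
  have e2 : ∀ x : β, (g2 x ^ (s / (P1 + P2))) ^ ((P1 + P2) / P2) = g2 x ^ (s / P2) := by
    intro x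
    rw [← Real.rpow_mul (hg2nn x)]
    congr 1
    rw [div_mul_div_comm]
    rw [mul_comm s (P1 + P2), mul_div_mul_left _ _ (by linarith : P1 + P2 ≠ 0)]
  simp_rw [e1, e2] at A3
  rw [show 1 / ((P1 + P2) / P1) = P1 / (P1 + P2) by rw [one_div_div],
    show 1 / ((P1 + P2) / P2) = P2 / (P1 + P2) by rw [one_div_div]] at A3
  have B1 : (∑ x, g1 x ^ (s / P1)) ^ (P1 / (P1 + P2)) ≤ Ds ^ (P1 / (P1 + P2)) :=
    Real.rpow_le_rpow (Finset.sum_nonneg fun x _ => Real.rpow_nonneg (hg1nn x) _)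
      IH1 (by positivity)
  have B2 : (∑ x, g2 x ^ (s / P2)) ^ (P2 / (P1 + P2)) ≤ Ds ^ (P2 / (P1 + P2)) :=
    Real.rpow_le_rpow (Finset.sum_nonneg fun x _ => Real.rpow_nonneg (hg2nn x) _)
      IH2 (by positivity)
  have hmul : ∀ x : β, g1 x ^ (s / (P1 + P2)) * g2 x ^ (s / (P1 + P2))
      = (g1 x * g2 x) ^ (s / (P1 + P2)) := fun x =>
    (Real.mul_rpow (hg1nn x) (hg2nn x)).symm
  calc ∑ x, (g1 x * g2 x) ^ (s / (P1 + P2))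
      = ∑ x, g1 x ^ (s / (P1 + P2)) * g2 x ^ (s / (P1 + P2)) :=
        Finset.sum_congr rfl fun x _ => (hmul x).symm
    _ ≤ (∑ x, g1 x ^ (s / P1)) ^ (P1 / (P1 + P2)) *
          (∑ x, g2 x ^ (s / P2)) ^ (P2 / (P1 + P2)) := A3
    _ ≤ Ds ^ (P1 / (P1 + P2)) * Ds ^ (P2 / (P1 + P2)) :=
        mul_le_mul B1 B2 (Real.rpow_nonneg (Finset.sum_nonneg fun x _ =>
          Real.rpow_nonneg (hg2nn x) _) _) (Real.rpow_nonneg hDsnn _)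
    _ = Ds := by
        rw [← Real.rpow_add' hDsnn (by
          rw [← add_div, div_self (by linarith : P1 + P2 ≠ 0)]
          norm_num), show P1/(P1+P2) + P2/(P1+P2) = 1 by
          rw [← add_div, div_self (by linarith : P1 + P2 ≠ 0)]]
        exact Real.rpow_one Ds

theorem claimD (W : SimpleGraph β) [DecidableRel W.Adj] :
    ∀ (F : RF α), 1 ≤ F.size → ∀ s : ℝ, (F.size : ℝ) ≤ s →
      ∑ x, ((F.cnt W x : ℝ)) ^ (s / (F.size : ℝ)) ≤ ∑ x, (W.degree x : ℝ) ^ s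
  | .nil, h, _, _ => absurd h (by simp [RF.size])
  | .cons (.node a f') .nil, _, s, hs => by
    have hsz : (RF.cons (RT.node a f') .nil).size = f'.size + 1 := by
      simp [RF.size, RT.size]
    have hcnt : ∀ x, (RF.cons (RT.node a f') .nil).cnt W x
        = ∑ y ∈ W.neighborFinset x, f'.cnt W y := by
      intro x
      simp [RF.cnt, RT.cnt]
    rw [hsz] at hs ⊢
    by_cases hf' : f'.size = 0
    · have hf'nil := RF.eq_nil_of_size_eq_zero f' hf'
      subst hf'nil
      rw [hf'] at hs ⊢
      simp only [Nat.cast_one, zero_add, div_one] at hs ⊢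
      refine le_of_eq (Finset.sum_congr rfl fun x _ => ?_)
      congr 1
      rw [hcnt x]
      simp [RF.cnt, SimpleGraph.card_neighborFinset_eq_degree]
    · -- main single-child case
      have hf'1 : 1 ≤ f'.size := Nat.one_le_iff_ne_zero.2 hf'
      set p : ℝ := ((f'.size : ℕ) : ℝ) + 1 with hp
      have hcast : ((f'.size + 1 : ℕ) : ℝ) = p := by push_cast [hp]; ring
      rw [hcast] at hs ⊢
      have hp1 : (1 : ℝ) ≤ p - 1 := by
        rw [hp]; push_cast; simp; exact_mod_cast hf'1
      have hp2 : (2 : ℝ) ≤ p := by linarith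
      have hppos : (0 : ℝ) < p := by linarith
      have hpm1pos : (0 : ℝ) < p - 1 := by linarith
      set q : ℝ := s / p with hq
      have hq1 : 1 ≤ q := (le_div_iff₀ hppos).2 (by linarith)
      have hqpos : 0 < q := lt_of_lt_of_le one_pos hq1
      set h : β → ℝ := fun y => ((f'.cnt W y : ℕ) : ℝ) with hh
      have hhnn : ∀ y, 0 ≤ h y := fun y => Nat.cast_nonneg _
      set d : β → ℝ := fun x => ((W.degree x : ℕ) : ℝ) with hd
      have hdnn : ∀ x, 0 ≤ d x := fun x => Nat.cast_nonneg _
      set Ds : ℝ := ∑ x, d x ^ s with hDs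
      have hDsnn : 0 ≤ Ds := Finset.sum_nonneg fun x _ => Real.rpow_nonneg (hdnn x) s
      -- rewrite LHS
      have lhs_eq : ∑ x, (((RF.cons (RT.node a f') .nil).cnt W x : ℝ)) ^ q
          = ∑ x, (∑ y ∈ W.neighborFinset x, h y) ^ q := by
        refine Finset.sum_congr rfl fun x _ => ?_
        rw [hcnt x]
        push_cast
        rfl
      rw [lhs_eq]
      -- A1 pointwise
      have A1 : ∀ x, (∑ y ∈ W.neighborFinset x, h y) ^ q
          ≤ d x ^ (q - 1) * ∑ y ∈ W.neighborFinset x, h y ^ q := by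
        intro x
        have := Real.rpow_sum_le_const_mul_sum_rpow_of_nonneg (W.neighborFinset x)
          (f := h) hq1 (fun y _ => hhnn y)
        rwa [SimpleGraph.card_neighborFinset_eq_degree] at this
      -- A2 swap
      have A2 : ∑ x, d x ^ (q - 1) * ∑ y ∈ W.neighborFinset x, h y ^ q
          = ∑ y, h y ^ q * ∑ x ∈ W.neighborFinset y, d x ^ (q - 1) := by
        have e1 : ∀ x : β, d x ^ (q - 1) * ∑ y ∈ W.neighborFinset x, h y ^ q
            = ∑ y ∈ W.neighborFinset x, d x ^ (q - 1) * h y ^ q := fun x =>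
          Finset.mul_sum _ _ _
        have e2 : ∀ y : β, h y ^ q * ∑ x ∈ W.neighborFinset y, d x ^ (q - 1)
            = ∑ x ∈ W.neighborFinset y, d x ^ (q - 1) * h y ^ q := fun y => by
          rw [Finset.mul_sum]
          exact Finset.sum_congr rfl fun x _ => mul_comm _ _
        simp_rw [e1, e2]
        exact nbhd_swap W (fun x y => d x ^ (q - 1) * h y ^ q)
      -- A3 Hölder
      set m : β → ℝ := fun y => ∑ x ∈ W.neighborFinset y, d x ^ (q - 1) with hm
      have hmnn : ∀ y, 0 ≤ m y := fun y =>
        Finset.sum_nonneg fun x _ => Real.rpow_nonneg (hdnn x) _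
      have hconj : Real.HolderConjugate (p / (p - 1)) p := by
        rw [Real.holderConjugate_iff]
        constructor
        · rw [lt_div_iff₀ hpm1pos]; linarith
        · rw [inv_div]
          field_simp
          ring
      have A3 := Real.inner_le_Lp_mul_Lq_of_nonneg Finset.univ hconj
        (f := fun y => h y ^ q) (g := m)
        (fun y _ => Real.rpow_nonneg (hhnn y) q) (fun y _ => hmnn y)
      -- simplify exponents in A3
      have e3 : ∀ y : β, (h y ^ q) ^ (p / (p - 1)) = h y ^ (s / (p - 1)) := by
        intro y
        rw [← Real.rpow_mul (hhnn y)]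
        congr 1
        rw [hq]
        field_simp
      rw [show (1 / (p / (p-1))) = (p-1)/p by rw [one_div_div]] at A3
      simp_rw [e3] at A3
      -- A4 : IH
      have IH := claimD W f' hf'1 s (by
        have : ((f'.size : ℕ) : ℝ) = p - 1 := by rw [hp]; ring
        rw [this]; linarith)
      have hf'cast : ((f'.size : ℕ) : ℝ) = p - 1 := by rw [hp]; ring
      rw [hf'cast] at IH
      have A4 : (∑ y, h y ^ (s / (p - 1))) ^ ((p - 1) / p) ≤ Ds ^ ((p - 1) / p) :=
        Real.rpow_le_rpow (Finset.sum_nonneg fun y _ => Real.rpow_nonneg (hhnn y) _)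
          IH (by positivity)
      -- A5 : lemM
      have A5 : (∑ y, m y ^ p) ^ (1 / p) ≤ Ds ^ (1 / p) := by
        have := lemM W (p := p) (r := q - 1) (by linarith) (by linarith)
        have hexp : p * ((q - 1) + 1) = s := by
          rw [hq]; field_simp; ring
        rw [hexp] at this
        exact Real.rpow_le_rpow (Finset.sum_nonneg fun y _ =>
          Real.rpow_nonneg (hmnn y) p) this (by positivity)
      -- combine
      calc ∑ x, (∑ y ∈ W.neighborFinset x, h y) ^ q
          ≤ ∑ x, d x ^ (q - 1) * ∑ y ∈ W.neighborFinset x, h y ^ q :=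
            Finset.sum_le_sum fun x _ => A1 x
        _ = ∑ y, h y ^ q * m y := A2
        _ ≤ (∑ y, h y ^ (s / (p - 1))) ^ ((p - 1) / p) * (∑ y, m y ^ p) ^ (1 / p) := A3
        _ ≤ Ds ^ ((p - 1) / p) * Ds ^ (1 / p) := by
            apply mul_le_mul A4 A5 (Real.rpow_nonneg (Finset.sum_nonneg fun y _ =>
              Real.rpow_nonneg (hmnn y) p) _) (Real.rpow_nonneg hDsnn _)
        _ = Ds := by
            rw [← Real.rpow_add' hDsnn (by
              rw [← add_div, sub_add_cancel, div_self hppos.ne']; norm_num), show (p-1)/p + 1/p = 1 by field_simp; ring]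
            exact Real.rpow_one Ds
  | .cons t (.cons t2 f2), _, s, hs => by
    have hp1 : 1 ≤ t.size := t.size_pos
    have hp2 : 1 ≤ (RF.cons t2 f2).size := by
      have := t2.size_pos
      simp only [RF.size]
      omega
    have hsz1 : ((RF.cons t .nil).size : ℝ) = ((t.size : ℕ) : ℝ) := by
      simp [RF.size]
    have hMcast : (((RF.cons t (RF.cons t2 f2)).size : ℕ) : ℝ)
        = ((t.size : ℕ) : ℝ) + (((RF.cons t2 f2).size : ℕ) : ℝ) := by
      simp only [RF.size]
      push_cast
      ring
    rw [hMcast] at hs ⊢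
    have IH1 := claimD W (RF.cons t .nil) (by simpa [RF.size] using hp1) s (by
      rw [hsz1]
      have : (0:ℝ) < (((RF.cons t2 f2).size : ℕ) : ℝ) := by exact_mod_cast hp2
      linarith)
    rw [hsz1] at IH1
    have IH2 := claimD W (RF.cons t2 f2) hp2 s (by
      have : (0:ℝ) < ((t.size : ℕ) : ℝ) := by exact_mod_cast hp1
      linarith)
    have hsplit : ∀ x, (((RF.cons t (RF.cons t2 f2)).cnt W x : ℕ) : ℝ)
        = (((RF.cons t .nil).cnt W x : ℕ) : ℝ) * (((RF.cons t2 f2).cnt W x : ℕ) : ℝ) := by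
      intro x
      simp only [RF.cnt]
      push_cast
      ring
    rw [show (∑ x, (((RF.cons t (RF.cons t2 f2)).cnt W x : ℕ) : ℝ) ^
        (s / (((t.size : ℕ) : ℝ) + (((RF.cons t2 f2).size : ℕ) : ℝ)))) =
        ∑ x, ((((RF.cons t .nil).cnt W x : ℕ) : ℝ) * (((RF.cons t2 f2).cnt W x : ℕ) : ℝ)) ^
        (s / (((t.size : ℕ) : ℝ) + (((RF.cons t2 f2).size : ℕ) : ℝ))) from
      Finset.sum_congr rfl fun x _ => by rw [hsplit x]]
    exact combineHolder W (fun x => (((RF.cons t .nil).cnt W x : ℕ) : ℝ))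
      (fun x => (((RF.cons t2 f2).cnt W x : ℕ) : ℝ))
      (fun x => Nat.cast_nonneg _) (fun x => Nat.cast_nonneg _)
      (by exact_mod_cast hp1) (by exact_mod_cast hp2) IH1 IH2
  termination_by F => F.size
  decreasing_by
    · simp only [RF.size, RT.size]
      omega
    · have := t2.size_pos
      simp only [RF.size, RT.size]
      omega
    · have := t.size_pos
      simp only [RF.size, RT.size]
      omega

end ClaimD

section Part1

theorem part1 {α : Type} [Fintype α] (t : ℕ) (ht : 1 ≤ t) (G : SimpleGraph α)
    (hconn : G.Connected) (hcard : 2 ≤ Fintype.card α) (hcard' : Fintype.card α ≤ t + 1)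
    (β : Type) [Fintype β] [Nonempty β] (W : SimpleGraph β) :
    homDensity (starGraph t) W ≥ homDensity G W ^ ((t : ℝ) / ((Fintype.card α : ℝ) - 1)) := by
  classical
  obtain ⟨T, hv, hnd, hcov⟩ := exists_spanning_rt G hconn
  set v := Fintype.card α with hvdef
  have htR : (0:ℝ) < (t:ℝ) := by exact_mod_cast ht
  set V1c : ℝ := (v : ℝ) - 1 with hV1c
  have hV1pos : (0:ℝ) < V1c := by
    rw [hV1c]
    have : (2:ℝ) ≤ (v:ℝ) := by exact_mod_cast hcard
    linarith
  have hV1t : V1c ≤ (t : ℝ) := by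
    rw [hV1c]
    have : ((v:ℕ):ℝ) ≤ ((t+1 : ℕ):ℝ) := by exact_mod_cast hcard'
    push_cast at this
    linarith
  set e : ℝ := (t : ℝ) / V1c with he
  have hepos : 0 < e := div_pos htR hV1pos
  set N : ℝ := (Fintype.card β : ℝ) with hN
  have hNpos : (0:ℝ) < N := by
    rw [hN]
    exact_mod_cast Fintype.card_pos
  set Sr : ℝ := ∑ x, (W.degree x : ℝ) ^ (t:ℝ) with hSr
  have hSrnn : 0 ≤ Sr := Finset.sum_nonneg fun x _ => Real.rpow_nonneg (Nat.cast_nonneg _) _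
  set A : ℕ := Nat.card (G →g W) with hA
  -- the star density
  have hstar : homDensity (starGraph t) W = Sr / N ^ (1 + t) := by
    rw [homDensity, nat_card_starHom t W]
    congr 1
    · rw [hSr]
      push_cast
      refine Finset.sum_congr rfl fun x _ => ?_
      rw [Real.rpow_natCast]
    · congr 1
      simp
  have hstar_nonneg : 0 ≤ homDensity (starGraph t) W := by
    rw [hstar]
    positivity
  have hGW : homDensity G W = (A : ℝ) / N ^ v := rfl
  -- size of the spanning tree
  rcases T with ⟨a, f⟩
  have hTlen : (RT.node a f).labels.length = v := by
    have h1 : (RT.node a f).labels.toFinset = Finset.univ :=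
      Finset.eq_univ_iff_forall.2 fun z => List.mem_toFinset.2 (hcov z)
    have h2 := List.toFinset_card_of_nodup hnd
    rw [h1, Finset.card_univ] at h2
    omega
  have hfsize : (f.size : ℝ) = V1c := by
    have h3 : (RT.node a f).labels.length = (RT.node a f).size := RT.length_labels _
    have h4 : (RT.node a f).size = f.size + 1 := by simp [RT.size]
    have : f.size + 1 = v := by omega
    rw [hV1c, ← this]
    push_cast
    ring
  have hfsize1 : 1 ≤ f.size := by
    have : (1:ℝ) ≤ (f.size : ℝ) := by
      rw [hfsize]
      rw [hV1c]
      have : (2:ℝ) ≤ (v:ℝ) := by exact_mod_cast hcard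
      linarith
    exact_mod_cast this
  -- counting bound
  have hcount : (A : ℝ) ≤ ∑ x, ((f.cnt W x : ℕ) : ℝ) := by
    have h1 := nat_card_hom_le_sum_cnt G W (Classical.arbitrary β) (RT.node a f) hv hnd hcov
    have h2 : ∀ x, (RT.node a f).cnt W x = f.cnt W x := fun x => rfl
    simp_rw [h2] at h1
    exact_mod_cast h1
  -- claimD
  have hclaim : ∑ x, ((f.cnt W x : ℕ) : ℝ) ^ ((t:ℝ) / (f.size : ℝ)) ≤ Sr :=
    claimD W f hfsize1 (t:ℝ) (by rw [hfsize]; exact hV1t)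
  rw [hfsize] at hclaim
  -- Hölder with constant 1 to get the key bound
  have key : (A : ℝ) ≤ N ^ (1 - V1c / (t:ℝ)) * Sr ^ (V1c / (t:ℝ)) := by
    rcases eq_or_lt_of_le hV1t with heq | hlt
    · -- V1c = t
      have h1 : (1:ℝ) - V1c / (t:ℝ) = 0 := by
        rw [← heq]
        field_simp
        norm_num
      have h2 : V1c / (t:ℝ) = 1 := by
        rw [← heq]
        field_simp
      rw [h1, h2, Real.rpow_zero, Real.rpow_one, one_mul]
      refine hcount.trans ?_
      refine le_trans (le_of_eq ?_) hclaim
      refine Finset.sum_congr rfl fun x _ => ?_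
      rw [← heq]
      rw [div_self (by linarith : V1c ≠ 0), Real.rpow_one]
    · -- V1c < t : Hölder
      have hconj : Real.HolderConjugate ((t:ℝ) / ((t:ℝ) - V1c)) ((t:ℝ) / V1c) := by
        rw [Real.holderConjugate_iff]
        constructor
        · rw [lt_div_iff₀ (by linarith : (0:ℝ) < (t:ℝ) - V1c)]
          linarith
        · rw [inv_div, inv_div]
          field_simp
          ring
      have h3 := Real.inner_le_Lp_mul_Lq_of_nonneg Finset.univ hconj
        (f := fun _ => (1:ℝ)) (g := fun x => ((f.cnt W x : ℕ) : ℝ))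
        (fun _ _ => zero_le_one) (fun x _ => Nat.cast_nonneg _)
      simp only [one_mul, Real.one_rpow] at h3
      rw [Finset.sum_const, Finset.card_univ, nsmul_eq_mul, mul_one] at h3
      have h4 : (1 : ℝ) / ((t:ℝ) / ((t:ℝ) - V1c)) = 1 - V1c / (t:ℝ) := by
        rw [one_div_div]
        field_simp
      have h5 : (1 : ℝ) / ((t:ℝ) / V1c) = V1c / (t:ℝ) := one_div_div _ _
      rw [h4, h5] at h3
      refine hcount.trans (h3.trans ?_)
      have h6 : (∑ x, ((f.cnt W x : ℕ) : ℝ) ^ ((t:ℝ)/V1c)) ^ (V1c/(t:ℝ)) ≤ Sr ^ (V1c/(t:ℝ)) :=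
        Real.rpow_le_rpow (Finset.sum_nonneg fun x _ =>
          Real.rpow_nonneg (Nat.cast_nonneg _) _) hclaim (by positivity)
      have h7 : (0:ℝ) ≤ N ^ (1 - V1c/(t:ℝ)) := Real.rpow_nonneg hNpos.le _
      exact mul_le_mul_of_nonneg_left h6 h7
  -- final algebra
  by_cases hA0 : (A : ℝ) = 0
  · rw [hGW, hA0, zero_div, Real.zero_rpow (ne_of_gt hepos)]
    exact hstar_nonneg
  · have hApos : (0:ℝ) < (A:ℝ) := lt_of_le_of_ne (Nat.cast_nonneg _) (Ne.symm hA0)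
    have hSrpos : (0:ℝ) < Sr := by
      rcases eq_or_lt_of_le hSrnn with h | h
      · exfalso
        rw [← h, Real.zero_rpow (by positivity : V1c / (t:ℝ) ≠ 0), mul_zero] at key
        linarith
      · exact h
    rw [hGW, hstar]
    have hvc : (v : ℝ) = V1c + 1 := by rw [hV1c]; ring
    have hNv : (N : ℝ) ^ v = N ^ ((v : ℕ) : ℝ) := (Real.rpow_natCast N v).symm
    have step1 : ((A:ℝ) / N ^ v) ^ e ≤ ((N ^ (1 - V1c/(t:ℝ)) * Sr ^ (V1c/(t:ℝ))) / N ^ v) ^ e := by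
      apply Real.rpow_le_rpow (by positivity) _ hepos.le
      gcongr
    have step2 : ((N ^ (1 - V1c/(t:ℝ)) * Sr ^ (V1c/(t:ℝ))) / N ^ v) ^ e = Sr / N ^ (1 + t) := by
      rw [hNv]
      have hXsplit : (N ^ (1 - V1c/(t:ℝ)) * Sr ^ (V1c/(t:ℝ))) / N ^ ((v:ℕ) : ℝ)
          = N ^ (1 - V1c/(t:ℝ) - ((v:ℕ) : ℝ)) * Sr ^ (V1c/(t:ℝ)) := by
        rw [Real.rpow_sub hNpos (1 - V1c/(t:ℝ)) ((v:ℕ) : ℝ)]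
        ring
      rw [hXsplit, Real.mul_rpow (Real.rpow_nonneg hNpos.le _) (Real.rpow_nonneg hSrnn _),
        ← Real.rpow_mul hNpos.le, ← Real.rpow_mul hSrnn]
      have hbe : V1c/(t:ℝ) * e = 1 := by
        rw [he]
        field_simp
      have hae : (1 - V1c/(t:ℝ) - ((v:ℕ) : ℝ)) * e = -(1 + (t:ℝ)) := by
        rw [he, hvc]
        field_simp
        ring
      rw [hbe, hae, Real.rpow_one, Real.rpow_neg hNpos.le]
      rw [show (1 + (t:ℝ)) = ((1 + t : ℕ) : ℝ) by push_cast; ring, Real.rpow_natCast]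
      rw [div_eq_mul_inv, mul_comm]
    calc ((A:ℝ) / N ^ v) ^ e ≤ _ := step1
      _ = Sr / N ^ (1 + t) := step2

end Part1

section Part2

lemma nat_card_hom_iso {δ β γ : Type} (H : SimpleGraph δ) (W1 : SimpleGraph β)
    (W2 : SimpleGraph γ) (iso : W1 ≃g W2) : Nat.card (H →g W1) = Nat.card (H →g W2) := by
  apply Nat.card_congr
  refine ⟨fun f => iso.toEmbedding.toHom.comp f, fun f => iso.symm.toEmbedding.toHom.comp f,
    fun f => ?_, fun f => ?_⟩ <;>
  · ext x
    simp [SimpleGraph.Embedding.toHom, SimpleGraph.Hom.comp]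

lemma homDensity_iso {δ β γ : Type} [Fintype δ] [Fintype β] [Fintype γ] (H : SimpleGraph δ)
    (W1 : SimpleGraph β) (W2 : SimpleGraph γ) (iso : W1 ≃g W2) :
    homDensity H W1 = homDensity H W2 := by
  simp only [homDensity, nat_card_hom_iso H W1 W2 iso, Fintype.card_congr iso.toEquiv]

def blocksGraph (m v : ℕ) : SimpleGraph (Fin m × Fin v) where
  Adj p q := p.1 = q.1 ∧ p ≠ q
  symm := ⟨fun (p q : Fin m × Fin v) (h : p.1 = q.1 ∧ p ≠ q) => ⟨h.1.symm, h.2.symm⟩⟩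
  loopless := ⟨fun (p : Fin m × Fin v) (h : p.1 = p.1 ∧ p ≠ p) => h.2 rfl⟩

instance blocksGraph_adjDec (m v : ℕ) : DecidableRel (blocksGraph m v).Adj :=
  fun p q => inferInstanceAs (Decidable (p.1 = q.1 ∧ p ≠ q))

lemma blocksGraph_degree (m v : ℕ) (p : Fin m × Fin v) :
    (blocksGraph m v).degree p = v - 1 := by
  classical
  have hnb : (blocksGraph m v).neighborFinset p = {p.1} ×ˢ (Finset.univ.erase p.2) := by
    ext q
    simp only [SimpleGraph.mem_neighborFinset, Finset.mem_product, Finset.mem_singleton,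
      Finset.mem_erase, Finset.mem_univ, and_true]
    constructor
    · rintro ⟨h1, h2⟩
      refine ⟨h1.symm, fun h => h2 ?_⟩
      exact (Prod.ext h1.symm h).symm
    · rintro ⟨h1, h2⟩
      exact ⟨h1.symm, fun h => h2 (by rw [h])⟩
  rw [← SimpleGraph.card_neighborFinset_eq_degree, hnb, Finset.card_product,
    Finset.card_singleton, one_mul, Finset.card_erase_of_mem (Finset.mem_univ _),
    Finset.card_univ, Fintype.card_fin]

lemma blocks_hom_lb {α : Type} [Fintype α] [Nonempty α] (G : SimpleGraph α) (m : ℕ) :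
    m * (Nat.factorial (Fintype.card α)) ≤
      Nat.card (G →g blocksGraph m (Fintype.card α)) := by
  classical
  set v := Fintype.card α with hv
  set J : Fin m × (α ≃ Fin v) → (G →g blocksGraph m v) := fun p =>
    ⟨fun a => (p.1, p.2 a), by
      intro a b hab
      exact ⟨rfl, fun h => G.ne_of_adj hab (p.2.injective (congrArg Prod.snd h))⟩⟩ with hJdef
  have hJ : Function.Injective J := by
    rintro ⟨i, σ⟩ ⟨i', σ'⟩ h
    have hfun : ∀ a : α, ((i, σ a) : Fin m × Fin v) = (i', σ' a) := fun a =>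
      congrFun (congrArg (fun φ : G →g blocksGraph m v => (φ : α → Fin m × Fin v)) h) a
    obtain ⟨a0⟩ := (inferInstance : Nonempty α)
    have hi : i = i' := congrArg Prod.fst (hfun a0)
    have hσ : σ = σ' := Equiv.ext fun a => congrArg Prod.snd (hfun a)
    rw [Prod.mk.injEq]
    exact ⟨hi, hσ⟩
  have hle := Nat.card_le_card_of_injective J hJ
  rwa [Nat.card_eq_fintype_card, Fintype.card_prod, Fintype.card_fin,
    Fintype.card_equiv (Fintype.equivFinOfCardEq rfl)] at hle

lemma blocks_facts {α : Type} [Fintype α] (t : ℕ) (G : SimpleGraph α)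
    (hcard : 2 ≤ Fintype.card α) (mm : ℕ) (hmm : 1 ≤ mm) :
    ∃ (W : SimpleGraph (Fin (mm * Fintype.card α))),
      ((Nat.factorial (Fintype.card α) : ℝ) / (Fintype.card α : ℝ) ^ (Fintype.card α)) *
          (mm : ℝ) ^ ((1:ℝ) - (Fintype.card α : ℝ)) ≤ homDensity G W ∧
      homDensity G W ≤ 1 ∧
      homDensity (starGraph t) W =
        (((Fintype.card α : ℝ) - 1) / ((mm * Fintype.card α : ℕ) : ℝ)) ^ t := by
  classical
  have hne : Nonempty α := Fintype.card_pos_iff.1 (by omega)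
  set v := Fintype.card α with hv
  have hv1 : 1 ≤ v := by omega
  set n : ℕ := mm * v with hn
  have hnpos : 0 < n := Nat.mul_pos hmm (by omega)
  have hmmR : (0:ℝ) < (mm:ℝ) := by exact_mod_cast hmm
  have hnR : (0:ℝ) < (n:ℝ) := by exact_mod_cast hnpos
  set W' := blocksGraph mm v with hW'
  set e : Fin mm × Fin v ≃ Fin n := finProdFinEquiv with he
  refine ⟨W'.map e.toEmbedding, ?_, ?_, ?_⟩
  all_goals
    have hiso := SimpleGraph.Iso.map e W'
    have hcards : Fintype.card (Fin mm × Fin v) = n := by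
      rw [Fintype.card_prod, Fintype.card_fin, Fintype.card_fin, hn]
  · -- lower bound
    rw [← homDensity_iso G W' (W'.map e.toEmbedding) hiso]
    have hGW' : homDensity G W' = (Nat.card (G →g W') : ℝ) / (n:ℝ)^v := by
      simp only [homDensity, hcards]
      rfl
    rw [hGW']
    have key : ((Nat.factorial v : ℝ) / (v : ℝ) ^ v) * (mm : ℝ) ^ ((1:ℝ) - (v : ℝ))
        = ((mm * Nat.factorial v : ℕ) : ℝ) / (n:ℝ)^v := by
      have h1 : (mm:ℝ)^((1:ℝ)-(v:ℝ)) = (mm:ℝ) / (mm:ℝ)^(v:ℕ) := by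
        rw [Real.rpow_sub hmmR, Real.rpow_one, Real.rpow_natCast]
      have h2 : ((n:ℕ):ℝ)^v = (mm:ℝ)^v * (v:ℝ)^v := by
        rw [hn]
        push_cast
        rw [mul_pow]
      rw [h1, h2]
      push_cast
      have hvv : ((v:ℝ))^v ≠ 0 := by positivity
      have hmm0 : (mm:ℝ)^v ≠ 0 := by positivity
      field_simp
    rw [key]
    have hlb := blocks_hom_lb G mm
    rw [← hv] at hlb
    gcongr
  · -- at most 1
    rw [← homDensity_iso G W' (W'.map e.toEmbedding) hiso]
    have hGW' : homDensity G W' = (Nat.card (G →g W') : ℝ) / (n:ℝ)^v := by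
      simp only [homDensity, hcards]
      rfl
    rw [hGW', div_le_one (by positivity)]
    have hub := nat_card_hom_le_pow G W'
    rw [hcards, ← hv] at hub
    exact_mod_cast hub
  · -- star density
    rw [← homDensity_iso (starGraph t) W' (W'.map e.toEmbedding) hiso]
    have hstar' : homDensity (starGraph t) W'
        = ((n * (v-1)^t : ℕ) : ℝ) / (n:ℝ)^(1+t) := by
      simp only [homDensity, hcards]
      rw [nat_card_starHom t W']
      congr 2
      · have : ∀ p : Fin mm × Fin v, W'.degree p = v - 1 := blocksGraph_degree mm v
        rw [Finset.sum_congr rfl fun p _ => by rw [this p]]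
        rw [Finset.sum_const, Finset.card_univ, hcards, smul_eq_mul]
      · simp
    rw [hstar']
    have hv1c : ((v-1 : ℕ):ℝ) = (v:ℝ)-1 := by
      push_cast [Nat.cast_sub hv1]
      ring
    push_cast [hv1c]
    rw [div_pow, pow_add, pow_one]
    have hnt : (n:ℝ)^t ≠ 0 := by positivity
    field_simp

end Part2

theorem part2 {α : Type} [Fintype α] (t : ℕ) (ht : 1 ≤ t) (G : SimpleGraph α)
    (hcard : 2 ≤ Fintype.card α) (c : ℝ)
    (hc : c < (t : ℝ) / ((Fintype.card α : ℝ) - 1)) :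
    ∃ (m : ℕ) (W : SimpleGraph (Fin m)), 0 < m ∧ 0 < homDensity G W ∧
      homDensity (starGraph t) W < homDensity G W ^ c := by
  classical
  set v := Fintype.card α with hv
  have hv2 : 2 ≤ v := hcard
  have hvR2 : (2:ℝ) ≤ (v:ℝ) := by exact_mod_cast hv2
  have hvRpos : (0:ℝ) < (v:ℝ) - 1 := by linarith
  set K : ℝ := (Nat.factorial v : ℝ) / (v:ℝ)^v with hK
  have hKpos : 0 < K := by
    apply div_pos
    · exact_mod_cast v.factorial_pos
    · positivity
  rcases le_or_gt c 0 with hc0 | hc0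
  · -- c ≤ 0, take mm = 1
    obtain ⟨W, hlow, hub, hstar⟩ := blocks_facts t G hcard 1 le_rfl
    have hDpos : 0 < homDensity G W := by
      refine lt_of_lt_of_le ?_ hlow
      have : ((1:ℕ):ℝ) ^ ((1:ℝ) - (v:ℝ)) = 1 := by
        rw [Nat.cast_one, Real.one_rpow]
      rw [this, mul_one]
      exact hKpos
    refine ⟨1 * v, W, by omega, hDpos, ?_⟩
    have h1 : (1:ℝ) ≤ homDensity G W ^ c :=
      Real.one_le_rpow_of_pos_of_le_one_of_nonpos hDpos hub hc0
    have h2 : homDensity (starGraph t) W < 1 := by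
      rw [hstar]
      apply pow_lt_one₀ _ _ (by omega)
      · apply div_nonneg (by linarith)
        positivity
      · rw [div_lt_one]
        · push_cast
          linarith
        · push_cast
          linarith
    linarith
  · -- 0 < c
    have hct : c * ((v:ℝ) - 1) < (t:ℝ) := (lt_div_iff₀ hvRpos).1 hc
    have hεpos : 0 < (t:ℝ) - ((v:ℝ)-1)*c := by nlinarith
    set ε : ℝ := (t:ℝ) - ((v:ℝ)-1)*c with hε
    set M0 : ℝ := (K ^ (-c)) ^ (1/ε) with hM0
    have hM0pos : 0 < M0 := Real.rpow_pos_of_pos (Real.rpow_pos_of_pos hKpos _) _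
    obtain ⟨mm, hmmge⟩ := exists_nat_ge (max 1 M0)
    have hmm1R : (1:ℝ) ≤ (mm:ℝ) := le_trans (le_max_left _ _) hmmge
    have hmmM0 : M0 ≤ (mm:ℝ) := le_trans (le_max_right _ _) hmmge
    have hmm1 : 1 ≤ mm := by exact_mod_cast hmm1R
    have hmmpos : (0:ℝ) < (mm:ℝ) := by linarith
    obtain ⟨W, hlow, hub, hstar⟩ := blocks_facts t G hcard mm hmm1
    have hLpos : 0 < K * (mm:ℝ)^((1:ℝ)-(v:ℝ)) :=
      mul_pos hKpos (Real.rpow_pos_of_pos hmmpos _)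
    have hDpos : 0 < homDensity G W := lt_of_lt_of_le hLpos hlow
    refine ⟨mm * v, W, Nat.mul_pos (by omega) (by omega), hDpos, ?_⟩
    have hnR : (0:ℝ) < ((mm*v : ℕ):ℝ) := by
      have : 0 < mm * v := Nat.mul_pos (by omega) (by omega)
      exact_mod_cast this
    have hbase : ((v:ℝ)-1)/((mm*v:ℕ):ℝ) < 1/(mm:ℝ) := by
      rw [div_lt_div_iff₀ hnR hmmpos]
      push_cast
      nlinarith
    have hstar_lt : homDensity (starGraph t) W < (1/(mm:ℝ))^t := by
      rw [hstar]
      apply pow_lt_pow_left₀ hbase _ (by omega)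
      apply div_nonneg (by linarith) hnR.le
    have hmt : ((1:ℝ)/(mm:ℝ))^t = (mm:ℝ)^(-(t:ℝ)) := by
      rw [one_div, inv_pow, Real.rpow_neg hmmpos.le, Real.rpow_natCast]
    have hLc : (mm:ℝ)^(-(t:ℝ)) ≤ (K * (mm:ℝ)^((1:ℝ)-(v:ℝ)))^c := by
      have hexp : (K * (mm:ℝ)^((1:ℝ)-(v:ℝ)))^c = K^c * (mm:ℝ)^(((1:ℝ)-(v:ℝ))*c) := by
        rw [Real.mul_rpow hKpos.le (Real.rpow_nonneg hmmpos.le _), ← Real.rpow_mul hmmpos.le]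
      rw [hexp]
      have hsplit : (mm:ℝ)^(-(t:ℝ)) = (mm:ℝ)^(((1:ℝ)-(v:ℝ))*c) * (mm:ℝ)^(-ε) := by
        rw [← Real.rpow_add hmmpos]
        congr 1
        rw [hε]
        ring
      rw [hsplit, mul_comm (K^c) _]
      apply mul_le_mul_of_nonneg_left _ (Real.rpow_nonneg hmmpos.le _)
      have h1 : M0^ε = K^(-c) := by
        rw [hM0, ← Real.rpow_mul (Real.rpow_nonneg hKpos.le _), one_div,
          inv_mul_cancel₀ (ne_of_gt hεpos), Real.rpow_one]
      have h2 : K^(-c) ≤ (mm:ℝ)^ε := by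
        rw [← h1]
        exact Real.rpow_le_rpow hM0pos.le hmmM0 hεpos.le
      have h3 : (mm:ℝ)^(-ε) = ((mm:ℝ)^ε)⁻¹ := Real.rpow_neg hmmpos.le ε
      have h4 : ((mm:ℝ)^ε)⁻¹ ≤ (K^(-c))⁻¹ :=
        inv_anti₀ (Real.rpow_pos_of_pos hKpos _) h2
      have h5 : (K^(-c))⁻¹ = K^c := by
        rw [← Real.rpow_neg hKpos.le, neg_neg]
      rw [h3]
      rw [h5] at h4
      exact h4
    have hfinal : (K * (mm:ℝ)^((1:ℝ)-(v:ℝ)))^c ≤ homDensity G W ^ c :=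
      Real.rpow_le_rpow hLpos.le hlow hc0.le
    calc homDensity (starGraph t) W < (1/(mm:ℝ))^t := hstar_lt
      _ = (mm:ℝ)^(-(t:ℝ)) := hmt
      _ ≤ (K * (mm:ℝ)^((1:ℝ)-(v:ℝ)))^c := hLc
      _ ≤ homDensity G W ^ c := hfinal

theorem stmt_3 {α : Type} [Fintype α] (t : ℕ) (ht : 1 ≤ t)
    (G : SimpleGraph α) (hconn : G.Connected)
    (hcard : 2 ≤ Fintype.card α) (hcard' : Fintype.card α ≤ t + 1) :
    (∀ (β : Type) [Fintype β] [Nonempty β] (W : SimpleGraph β),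
      homDensity (starGraph t) W ≥
        homDensity G W ^ ((t : ℝ) / ((Fintype.card α : ℝ) - 1))) ∧
    (∀ c : ℝ, c < (t : ℝ) / ((Fintype.card α : ℝ) - 1) →
      ∃ (m : ℕ) (W : SimpleGraph (Fin m)), 0 < m ∧
        0 < homDensity G W ∧
        homDensity (starGraph t) W < homDensity G W ^ c) := by
  constructor
  · intro β _ _ W
    exact part1 t ht G hconn hcard hcard' β W
  · intro c hc
    exact part2 t ht G hcard c hc
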